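/- arXiv:1409.8134 — 5 statements merged into one kernel-verified Lean document; each statement's English description precedes it below -/
import Mathlib

section
/- Let σ₊ ∈ ℝ and θ ∈ ℝ with 2 sin²θ ≥ 1, let φ̃ satisfy sin φ̃ = sgn(sin θ)√(2 sin²θ − 1), cos φ̃ = √2 cos θ, and set z = e^{iθ} and f = e^{i(θ + σ₊ + φ̃)}. Then f² − √2 e^{iσ₊}(1 + z²) f + e^{2iσ₊} z² = 0. -/
open Real Complex

theorem f_satisfies_quadratic (σp θ φ : ℝ) (h2 : 1 ≤ 2 * Real.sin θ ^ 2)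
    (hsin : Real.sin φ = Real.sign (Real.sin θ) * Real.sqrt (2 * Real.sin θ ^ 2 - 1))
    (hcos : Real.cos φ = Real.sqrt 2 * Real.cos θ) :
    let z : ℂ := Complex.exp (θ * Complex.I)
    let f : ℂ := Complex.exp ((θ + σp + φ) * Complex.I)
    f ^ 2 - Real.sqrt 2 * Complex.exp (σp * Complex.I) * (1 + z ^ 2) * f +
      Complex.exp (2 * σp * Complex.I) * z ^ 2 = 0 := by
  intro z f
  set a : ℂ := Complex.exp (θ * Complex.I) with ha
  set b : ℂ := Complex.exp (σp * Complex.I) with hb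
  set c : ℂ := Complex.exp (φ * Complex.I) with hc
  have hI : (Complex.I) ^ 2 = -1 := Complex.I_sq
  have hpyφ : (Real.sin φ : ℂ) ^ 2 + (Real.cos φ : ℂ) ^ 2 = 1 := by
    exact_mod_cast congrArg (fun x : ℝ => (x : ℂ)) (Real.sin_sq_add_cos_sq φ)
  have hpyθ : (Real.sin θ : ℂ) ^ 2 + (Real.cos θ : ℂ) ^ 2 = 1 := by
    exact_mod_cast congrArg (fun x : ℝ => (x : ℂ)) (Real.sin_sq_add_cos_sq θ)
  have hf : f = a * b * c := by
    simp only [f, ha, hb, hc, ← Complex.exp_add]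
    ring_nf
  have hb2 : Complex.exp (2 * σp * Complex.I) = b ^ 2 := by
    rw [hb, ← Complex.exp_nat_mul]
    norm_num
    ring_nf
  have hca : c = (Real.cos φ : ℂ) + (Real.sin φ : ℂ) * Complex.I := by
    rw [hc, Complex.exp_mul_I, ← Complex.ofReal_cos, ← Complex.ofReal_sin]
  have haa : a = (Real.cos θ : ℂ) + (Real.sin θ : ℂ) * Complex.I := by
    rw [ha, Complex.exp_mul_I, ← Complex.ofReal_cos, ← Complex.ofReal_sin]
  have hkey : c ^ 2 - 2 * (Real.cos φ : ℂ) * c + 1 = 0 := by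
    rw [hca]
    linear_combination (Real.sin φ : ℂ) ^ 2 * hI - hpyφ
  have hmid : (Real.sqrt 2 : ℂ) * (1 + a ^ 2) = 2 * (Real.cos φ : ℂ) * a := by
    have hcosC : (Real.cos φ : ℂ) = (Real.sqrt 2 : ℂ) * (Real.cos θ : ℂ) := by
      exact_mod_cast congrArg (fun x : ℝ => (x : ℂ)) hcos
    rw [haa, hcosC]
    linear_combination (Real.sqrt 2 : ℂ) * (Real.sin θ : ℂ) ^ 2 * hI - (Real.sqrt 2 : ℂ) * hpyθ
  rw [hf, hb2]
  linear_combination a ^ 2 * b ^ 2 * hkey - a * b ^ 2 * c * hmid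
end

section
/- Let σ, θ ∈ ℝ and φ̃ ∈ ℝ. If e^{i(θ + φ̃)} = i e^{−iσ}, sin φ̃ = sgn(sin θ)√(2 sin²θ − 1) and cos φ̃ = √2 cos θ, then sin²θ = (√2 − sin σ)²/(3 − 2√2 sin σ) and cos²θ = cos²σ/(3 − 2√2 sin σ). -/
open Real Complex

theorem singular_point_family_one (σ θ φ : ℝ)
    (heq : Complex.exp ((θ + φ) * Complex.I) = Complex.I * Complex.exp (-σ * Complex.I))
    (hsin : Real.sin φ = Real.sign (Real.sin θ) * Real.sqrt (2 * Real.sin θ ^ 2 - 1))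
    (hcos : Real.cos φ = Real.sqrt 2 * Real.cos θ) :
    Real.sin θ ^ 2 = (Real.sqrt 2 - Real.sin σ) ^ 2 / (3 - 2 * Real.sqrt 2 * Real.sin σ) ∧
    Real.cos θ ^ 2 = Real.cos σ ^ 2 / (3 - 2 * Real.sqrt 2 * Real.sin σ) := by
  -- Extract real and imaginary parts of the complex equation
  have h := heq
  rw [show ((θ:ℂ) + φ) * Complex.I = ((θ + φ : ℝ) : ℂ) * Complex.I by push_cast; ring,
      show (-(σ:ℂ)) * Complex.I = ((-σ : ℝ) : ℂ) * Complex.I by push_cast; ring] at h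
  rw [Complex.ext_iff, Complex.exp_ofReal_mul_I_re, Complex.exp_ofReal_mul_I_im,
      Complex.mul_re, Complex.mul_im, Complex.exp_ofReal_mul_I_re, Complex.exp_ofReal_mul_I_im,
      Complex.I_re, Complex.I_im] at h
  simp [Real.cos_neg, Real.sin_neg] at h
  have h1 : Real.cos (θ + φ) = Real.sin σ := by linarith [h.1]
  have h2 : Real.sin (θ + φ) = Real.cos σ := by linarith [h.2]
  -- Algebraic part
  have h2sq : (Real.sqrt 2) ^ 2 = 2 := Real.sq_sqrt (by norm_num)
  have pythθ := Real.sin_sq_add_cos_sq θ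
  set u := Real.sqrt 2 with hu
  set s := Real.sin θ with hs
  set c := Real.cos θ with hc
  have pythφ := Real.sin_sq_add_cos_sq φ
  have hphisq : Real.sin φ ^ 2 = 2 * s ^ 2 - 1 := by
    linear_combination pythφ - (Real.cos φ + u * c) * hcos - c ^ 2 * h2sq - 2 * pythθ
  have hge : (0:ℝ) ≤ 2 * s ^ 2 - 1 := by rw [← hphisq]; positivity
  have hx : 0 ≤ s * Real.sin φ := by
    rw [hsin]
    rcases lt_trichotomy s 0 with hlt | heq0 | hgt
    · rw [Real.sign_of_neg hlt]; nlinarith [Real.sqrt_nonneg (2 * s ^ 2 - 1)]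
    · simp [heq0]
    · rw [Real.sign_of_pos hgt]; nlinarith [Real.sqrt_nonneg (2 * s ^ 2 - 1)]
  have hx2 : (s * Real.sin φ) ^ 2 = s ^ 2 * (2 * s ^ 2 - 1) := by
    rw [mul_pow, hphisq]
  rw [Real.cos_add] at h1
  rw [Real.sin_add] at h2
  rw [hcos] at h1 h2
  have hD : 3 - 2 * u * Real.sin σ
      = 4 * s ^ 2 - 1 + 2 * u * (s * Real.sin φ) := by
    rw [← h1]; linear_combination (-4 : ℝ) * pythθ - 2 * c ^ 2 * h2sq
  have hDpos : 0 < 3 - 2 * u * Real.sin σ := by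
    rw [hD]; nlinarith [Real.sqrt_nonneg 2, hge, hx]
  constructor
  · rw [eq_div_iff (ne_of_gt hDpos), hD, ← h1]
    linear_combination (2 * u ^ 2 * s ^ 2 - u ^ 2 * (s ^ 2 + c ^ 2 - 1) + 2 * u * (s * Real.sin φ)) * pythθ
      - s ^ 4 * h2sq - hx2
  · rw [eq_div_iff (ne_of_gt hDpos), hD, ← h2]
    linear_combination (-(s ^ 2 * c ^ 2)) * h2sq - c ^ 2 * hphisq
end

section
/- Let σ, θ ∈ ℝ and φ̃ ∈ ℝ. If e^{i(θ + φ̃)} = −i e^{−iσ}, sin φ̃ = sgn(sin θ)√(2 sin²θ − 1) and cos φ̃ = √2 cos θ, then sin²θ = (√2 + sin σ)²/(3 + 2√2 sin σ) and cos²θ = cos²σ/(3 + 2√2 sin σ). -/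
open Real Complex

theorem singular_point_family_two (σ θ φ : ℝ)
    (heq : Complex.exp ((θ + φ) * Complex.I) = -Complex.I * Complex.exp (-σ * Complex.I))
    (hsin : Real.sin φ = Real.sign (Real.sin θ) * Real.sqrt (2 * Real.sin θ ^ 2 - 1))
    (hcos : Real.cos φ = Real.sqrt 2 * Real.cos θ) :
    Real.sin θ ^ 2 = (Real.sqrt 2 + Real.sin σ) ^ 2 / (3 + 2 * Real.sqrt 2 * Real.sin σ) ∧
    Real.cos θ ^ 2 = Real.cos σ ^ 2 / (3 + 2 * Real.sqrt 2 * Real.sin σ) := by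
  -- extract real and imaginary parts of heq
  have h : ((Real.cos (θ+φ) : ℂ) + Real.sin (θ+φ) * Complex.I)
      = -Complex.I * ((Real.cos (-σ) : ℂ) + Real.sin (-σ) * Complex.I) := by
    rw [Complex.ofReal_cos, Complex.ofReal_sin, Complex.ofReal_cos, Complex.ofReal_sin,
      ← Complex.exp_mul_I, ← Complex.exp_mul_I]
    push_cast
    exact heq
  rw [Complex.ext_iff] at h
  obtain ⟨h1, h2⟩ := h
  simp only [Complex.add_re, Complex.add_im, Complex.mul_re, Complex.mul_im, Complex.neg_re,
    Complex.neg_im, Complex.I_re, Complex.I_im, Complex.ofReal_re, Complex.ofReal_im,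
    Real.cos_neg, Real.sin_neg] at h1 h2
  have h1' : Real.cos (θ + φ) = -Real.sin σ := by linarith
  have h2' : Real.sin (θ + φ) = -Real.cos σ := by linarith
  rw [Real.cos_add, hsin, hcos] at h1'
  rw [Real.sin_add, hsin, hcos] at h2'
  set s := Real.sin θ with hsdef
  set c := Real.cos θ with hcdef
  set q := Real.sqrt 2 with hqdef
  set x := Real.sin σ with hxdef
  set y := Real.cos σ with hydef
  set e := Real.sign s with hedef
  set r := Real.sqrt (2 * s ^ 2 - 1) with hrdef
  have hs : s ^ 2 + c ^ 2 = 1 := Real.sin_sq_add_cos_sq θ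
  have hq : q ^ 2 = 2 := Real.sq_sqrt (by norm_num)
  have hqnn : (0:ℝ) ≤ q := Real.sqrt_nonneg 2
  have hpy : Real.sin φ ^ 2 + Real.cos φ ^ 2 = 1 := Real.sin_sq_add_cos_sq φ
  rw [hsin, hcos] at hpy
  have hpy2 : e ^ 2 * r ^ 2 + 2 * c ^ 2 = 1 := by linear_combination hpy - c ^ 2 * hq
  have hsne : s ≠ 0 := by
    intro h0
    have he0 : e = 0 := by rw [hedef, h0, Real.sign_zero]
    rw [he0] at hpy2
    have hc1 : c ^ 2 = 1 := by rw [h0] at hs; linarith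
    nlinarith
  have he : e ^ 2 = 1 := by
    rcases lt_trichotomy s 0 with hlt | hz | hgt
    · rw [hedef, Real.sign_of_neg hlt]; norm_num
    · exact absurd hz hsne
    · rw [hedef, Real.sign_of_pos hgt]; norm_num
  have hnn : (0:ℝ) ≤ 2 * s ^ 2 - 1 := by
    by_contra hlt
    push_neg at hlt
    have hr0 : r = 0 := by
      rw [hrdef]
      exact Real.sqrt_eq_zero_of_nonpos hlt.le
    have h0 : e ^ 2 * r ^ 2 = 0 := by rw [hr0]; ring
    linarith
  have hr : r ^ 2 = 2 * s ^ 2 - 1 := Real.sq_sqrt hnn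
  have eq1 : q * c ^ 2 - e * s * r = -x := by linear_combination h1'
  have eq2 : q * s * c + e * c * r = -y := by linear_combination h2'
  have hx1 : (-1:ℝ) ≤ x := Real.neg_one_le_sin σ
  have hD : (0:ℝ) < 3 + 2 * q * x := by
    nlinarith [mul_nonneg hqnn (by linarith : (0:ℝ) ≤ x + 1)]
  constructor
  · rw [eq_div_iff (ne_of_gt hD)]
    linear_combination (-(x + e*s*r - q*c^2 + 2*q*(1-s^2))) * eq1 - s^2*r^2 * he - s^2 * hr
      - (1 - 2*c^2 + c^4 + 2*s^2*c^2) * hq - (-2*q*e*s*r + 2*s^2 + 2*c^2 - 2) * hs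
  · rw [eq_div_iff (ne_of_gt hD)]
    linear_combination (-(y - (q*s*c + e*c*r))) * eq2 + (2*q*c^2) * eq1 - c^2*r^2 * he
      - c^2 * hr - (s^2*c^2 + 2*c^4) * hq - 4*c^2 * hs
end

section
/- Let s ∈ (−1/√2, 1] and let θ ∈ ℝ satisfy sin²θ = (√2 + s)²/(3 + 2√2 s). Then 1 + √2|sin θ|/√(2 sin²θ − 1) = (3 + 2√2 s)/(1 + √2 s), and hence 1/(4(1 + √2|sin θ|/√(2 sin²θ − 1))²) = (1 + √2 s)²/(4(3 + 2√2 s)²). -/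
open Real

theorem residue_family_two (s θ : ℝ) (hs1 : -1 / Real.sqrt 2 < s) (hs2 : s ≤ 1)
    (hθ : Real.sin θ ^ 2 = (Real.sqrt 2 + s) ^ 2 / (3 + 2 * Real.sqrt 2 * s)) :
    1 + Real.sqrt 2 * |Real.sin θ| / Real.sqrt (2 * Real.sin θ ^ 2 - 1)
      = (3 + 2 * Real.sqrt 2 * s) / (1 + Real.sqrt 2 * s) ∧
    1 / (4 * (1 + Real.sqrt 2 * |Real.sin θ| / Real.sqrt (2 * Real.sin θ ^ 2 - 1)) ^ 2)
      = (1 + Real.sqrt 2 * s) ^ 2 / (4 * (3 + 2 * Real.sqrt 2 * s) ^ 2) := by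
  have hr0 : (0:ℝ) < Real.sqrt 2 := Real.sqrt_pos.mpr (by norm_num)
  have hr2 : Real.sqrt 2 ^ 2 = 2 := Real.sq_sqrt (by norm_num)
  set r := Real.sqrt 2 with hrdef
  have h1' : -1 < r * s := by
    have h := mul_lt_mul_of_pos_left hs1 hr0
    have h2 : r * (-1 / r) = -1 := by field_simp
    linarith [h2 ▸ h]
  have h1 : 0 < 1 + r * s := by linarith
  have h3 : 0 < 3 + 2 * r * s := by linarith
  have hrs : 0 < r + s := by nlinarith
  have habs : |Real.sin θ| = (r + s) / Real.sqrt (3 + 2 * r * s) := by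
    rw [← Real.sqrt_sq_eq_abs, hθ, Real.sqrt_div (sq_nonneg _), Real.sqrt_sq hrs.le]
  have hsub : 2 * Real.sin θ ^ 2 - 1 = (1 + r * s) ^ 2 / (3 + 2 * r * s) := by
    rw [hθ]
    field_simp
    linear_combination (2 - s ^ 2) * hr2
  have hsqrt : Real.sqrt (2 * Real.sin θ ^ 2 - 1)
      = (1 + r * s) / Real.sqrt (3 + 2 * r * s) := by
    rw [hsub, Real.sqrt_div (sq_nonneg _), Real.sqrt_sq h1.le]
  have hq : 0 < Real.sqrt (3 + 2 * r * s) := Real.sqrt_pos.mpr h3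
  have key : 1 + r * |Real.sin θ| / Real.sqrt (2 * Real.sin θ ^ 2 - 1)
      = (3 + 2 * r * s) / (1 + r * s) := by
    rw [habs, hsqrt]
    have hQ : Real.sqrt (3 + 2 * r * s) ^ 2 = 3 + 2 * r * s := Real.sq_sqrt h3.le
    field_simp
    have hX : Real.sqrt (3 + r * s * 2) ≠ 0 := by
      rw [show 3 + r * s * 2 = 3 + 2 * r * s by ring]; exact hq.ne'
    rw [mul_div_assoc, div_self hX, mul_one]
    linear_combination hr2
  refine ⟨key, ?_⟩
  rw [key]
  have h1n : (1 + r * s) ≠ 0 := h1.ne'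
  have h3n : (3 + 2 * r * s) ≠ 0 := h3.ne'
  field_simp
end

section
/- Let σ₊, σ₋ ∈ ℝ, σ = (σ₊−σ₋)/2, c ∈ ℂ, α = c/√2, β = −i e^{−i(σ₊+σ₋)/2} c/√2, λ = (cos σ + i(sin σ + √2))/√(3 + 2√2 sin σ), and θ_s = −i/√(3 + 2√2 sin σ), where sin σ > −1/√2 and c ≠ 0. Then the four expressions −(√2 λ²α + e^{iσ₊}β)/(λα), β/(λ(e^{−iσ₊}α + √2β)), α/(λ(√2α − e^{iσ₋}β)), and (e^{−iσ₋}α − √2λ²β)/(λβ) are all equal to θ_s. -/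
open Real Complex

set_option maxHeartbeats 1000000

theorem theta_s_consistency (σp σm : ℝ) (c : ℂ) (hc : c ≠ 0)
    (hσ : Real.sin ((σp - σm) / 2) > -1 / Real.sqrt 2) :
    let σ := (σp - σm) / 2
    let α : ℂ := c / Real.sqrt 2
    let β : ℂ := -Complex.I * Complex.exp (-((σp + σm) / 2 : ℝ) * Complex.I) * c / Real.sqrt 2
    let lam : ℂ := (Real.cos σ + (Real.sin σ + Real.sqrt 2) * Complex.I) /
      (Real.sqrt (3 + 2 * Real.sqrt 2 * Real.sin σ) : ℂ)
    let θs : ℂ := -Complex.I / (Real.sqrt (3 + 2 * Real.sqrt 2 * Real.sin σ) : ℂ)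
    (-(Real.sqrt 2 * lam ^ 2 * α + Complex.exp (σp * Complex.I) * β) / (lam * α) = θs) ∧
    β / (lam * (Complex.exp (-σp * Complex.I) * α + Real.sqrt 2 * β)) = θs ∧
    α / (lam * (Real.sqrt 2 * α - Complex.exp (σm * Complex.I) * β)) = θs ∧
    (Complex.exp (-σm * Complex.I) * α - Real.sqrt 2 * lam ^ 2 * β) / (lam * β) = θs := by
  intro σ α β lam θs
  have hσeq : σ = (σp - σm) / 2 := rfl
  have hS2pos : (0:ℝ) < Real.sqrt 2 := by positivity
  have hσ' : Real.sin σ > -1 / Real.sqrt 2 := hσ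
  have hm : Real.sqrt 2 * (-1 / Real.sqrt 2) = -1 := by field_simp
  have hpos : (0:ℝ) < 3 + 2 * Real.sqrt 2 * Real.sin σ := by
    nlinarith [mul_lt_mul_of_pos_left hσ' hS2pos, hm]
  set s : ℝ := Real.sqrt (3 + 2 * Real.sqrt 2 * Real.sin σ) with hs_def
  have hs2' : s^2 = 3 + 2 * Real.sqrt 2 * Real.sin σ := Real.sq_sqrt hpos.le
  have hs2 : (s:ℂ)^2 = 3 + 2*(Real.sqrt 2:ℂ)*(Real.sin σ:ℂ) := by exact_mod_cast hs2'
  have hspos : (0:ℝ) < s := Real.sqrt_pos.mpr hpos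
  have hs0 : (s:ℂ) ≠ 0 := by exact_mod_cast hspos.ne'
  have hS : ((Real.sqrt 2 : ℝ):ℂ)^2 = 2 := by
    have h2 : (Real.sqrt 2)^2 = 2 := Real.sq_sqrt (by norm_num)
    exact_mod_cast h2
  have hSne : ((Real.sqrt 2 : ℝ):ℂ) ≠ 0 := by exact_mod_cast hS2pos.ne'
  have hcs : ((Real.cos σ : ℝ):ℂ)^2 + ((Real.sin σ : ℝ):ℂ)^2 = 1 := by
    have h3 := Real.cos_sq_add_sin_sq σ
    exact_mod_cast h3
  have key : ∀ x : ℝ, Complex.exp ((x:ℂ) * Complex.I)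
      = (Real.cos x : ℂ) + (Real.sin x : ℂ) * Complex.I := fun x => by
    rw [Complex.exp_mul_I, ← Complex.ofReal_cos, ← Complex.ofReal_sin]
  set E : ℂ := Complex.exp ((((σp+σm)/2 : ℝ):ℂ) * Complex.I) with hE_def
  set E' : ℂ := Complex.exp (-(((σp+σm)/2 : ℝ):ℂ) * Complex.I) with hE'_def
  have hEE : E * E' = 1 := by
    rw [hE_def, hE'_def, ← Complex.exp_add]
    simp
  have h1 : Complex.exp ((σp:ℂ) * Complex.I)
      = E * ((Real.cos σ:ℂ) + (Real.sin σ:ℂ) * Complex.I) := by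
    have e : ((σp:ℂ)) * Complex.I = (((σp+σm)/2 : ℝ):ℂ) * Complex.I + ((σ:ℝ):ℂ) * Complex.I := by
      rw [hσeq]; push_cast; ring
    rw [e, Complex.exp_add, hE_def, key σ]
  have h2 : Complex.exp (-(σp:ℂ) * Complex.I)
      = E' * ((Real.cos σ:ℂ) - (Real.sin σ:ℂ) * Complex.I) := by
    have e : (-(σp:ℂ)) * Complex.I = -(((σp+σm)/2 : ℝ):ℂ) * Complex.I + ((-σ:ℝ):ℂ) * Complex.I := by
      rw [hσeq]; push_cast; ring
    rw [e, Complex.exp_add, hE'_def, key (-σ), Real.cos_neg, Real.sin_neg]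
    push_cast; ring
  have h3 : Complex.exp ((σm:ℂ) * Complex.I)
      = E * ((Real.cos σ:ℂ) - (Real.sin σ:ℂ) * Complex.I) := by
    have e : ((σm:ℂ)) * Complex.I = (((σp+σm)/2 : ℝ):ℂ) * Complex.I + ((-σ:ℝ):ℂ) * Complex.I := by
      rw [hσeq]; push_cast; ring
    rw [e, Complex.exp_add, hE_def, key (-σ), Real.cos_neg, Real.sin_neg]
    push_cast; ring
  have h4 : Complex.exp (-(σm:ℂ) * Complex.I)
      = E' * ((Real.cos σ:ℂ) + (Real.sin σ:ℂ) * Complex.I) := by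
    have e : (-(σm:ℂ)) * Complex.I = -(((σp+σm)/2 : ℝ):ℂ) * Complex.I + ((σ:ℝ):ℂ) * Complex.I := by
      rw [hσeq]; push_cast; ring
    rw [e, Complex.exp_add, hE'_def, key σ]
  have hα : α = c / ((Real.sqrt 2 : ℝ):ℂ) := rfl
  have hβ : β = -Complex.I * E' * c / ((Real.sqrt 2 : ℝ):ℂ) := rfl
  have hlam : lam = ((Real.cos σ:ℂ) + ((Real.sin σ:ℂ) + ((Real.sqrt 2:ℝ):ℂ)) * Complex.I) / (s:ℂ) := rfl
  have hθ : θs = -Complex.I / (s:ℂ) := rfl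
  have hIne : Complex.I ≠ 0 := Complex.I_ne_zero
  have hsqrt2_gt1 : (1:ℝ) < Real.sqrt 2 := by
    nlinarith [Real.sq_sqrt (show (0:ℝ) ≤ 2 by norm_num), hS2pos]
  have hsin_ge : -1 ≤ Real.sin σ := Real.neg_one_le_sin σ
  set C : ℂ := ((Real.cos σ : ℝ):ℂ) with hC_def
  set Sn : ℂ := ((Real.sin σ : ℝ):ℂ) with hSn_def
  set S2 : ℂ := ((Real.sqrt 2 : ℝ):ℂ) with hS2_def
  set sc : ℂ := ((s : ℝ):ℂ) with hsc_def
  have simpset := 0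
  have hN : C + (Sn + S2) * Complex.I ≠ 0 := by
    intro h
    have him := congrArg Complex.im h
    simp only [hC_def, hSn_def, hS2_def, Complex.add_im, Complex.mul_im, Complex.I_im,
      Complex.I_re, Complex.ofReal_im, Complex.ofReal_re, Complex.add_re, Complex.zero_im,
      mul_one, mul_zero, add_zero, zero_add] at him
    nlinarith [him]
  have hN2 : C - (Sn + S2) * Complex.I ≠ 0 := by
    intro h
    have him := congrArg Complex.im h
    simp only [hC_def, hSn_def, hS2_def, Complex.sub_im, Complex.add_im, Complex.mul_im,
      Complex.I_im, Complex.I_re, Complex.ofReal_im, Complex.ofReal_re, Complex.add_re,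
      Complex.zero_im, mul_one, mul_zero, add_zero, zero_add, zero_sub] at him
    nlinarith [him]
  have hN3 : (S2 + Sn) + C * Complex.I ≠ 0 := by
    intro h
    have hre := congrArg Complex.re h
    simp only [hC_def, hSn_def, hS2_def, Complex.add_re, Complex.mul_re, Complex.I_im,
      Complex.I_re, Complex.ofReal_im, Complex.ofReal_re, Complex.zero_re, mul_one,
      mul_zero, add_zero, zero_add, zero_sub, sub_zero] at hre
    nlinarith [hre]
  have hE'ne : E' ≠ 0 := Complex.exp_ne_zero _
  have hlam0 : lam ≠ 0 := by rw [hlam]; exact div_ne_zero hN hs0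
  have hα0 : α ≠ 0 := div_ne_zero hc hSne
  have hβ0 : β ≠ 0 := by
    rw [hβ]
    exact div_ne_zero (by exact mul_ne_zero (mul_ne_zero (neg_ne_zero.mpr hIne) hE'ne) hc) hSne
  have hD2 : Complex.exp (-(σp:ℂ) * Complex.I) * α + S2 * β
      = E' * c * (C - (Sn + S2) * Complex.I) / S2 := by
    rw [h2, hα, hβ]
    field_simp
    linear_combination (0:ℂ)
  have hD2ne : Complex.exp (-(σp:ℂ) * Complex.I) * α + S2 * β ≠ 0 := by
    rw [hD2]
    exact div_ne_zero (mul_ne_zero (mul_ne_zero hE'ne hc) hN2) hSne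
  have hD3 : S2 * α - Complex.exp ((σm:ℂ) * Complex.I) * β
      = c * ((S2 + Sn) + C * Complex.I) / S2 := by
    rw [h3, hα, hβ]
    field_simp
    linear_combination ((-1)*E*E'*Sn) * Complex.I_sq + ((1)*Complex.I*C + (1)*Sn) * hEE
  have hD3ne : S2 * α - Complex.exp ((σm:ℂ) * Complex.I) * β ≠ 0 := by
    rw [hD3]
    exact div_ne_zero (mul_ne_zero hc hN3) hSne
  refine ⟨?_, ?_, ?_, ?_⟩
  · rw [hθ, div_eq_div_iff (mul_ne_zero hlam0 hα0) hs0, h1, hα, hβ, hlam]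
    field_simp
    linear_combination ((-2)*Complex.I*C + (-2)*Complex.I^2*Sn + (-1)*S2*Complex.I^2) * hS + ((1)*Complex.I*E*E'*C + (1)*Complex.I^2*E*E'*Sn) * hs2 + ((-1)*S2*Sn^2 + (-3)*Sn + (-1)*S2 + (3)*E*E'*Sn + (2)*S2*E*E'*Sn^2) * Complex.I_sq + ((3)*Complex.I*C + (2)*S2*Complex.I*C*Sn + (-3)*Sn + (-2)*S2*Sn^2) * hEE + ((-1)*S2) * hcs
  · rw [hθ, div_eq_div_iff (mul_ne_zero hlam0 hD2ne) hs0, hD2, hβ, hlam]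
    field_simp
    linear_combination ((-1)*Complex.I^2) * hS + ((-1)) * hs2 + ((-1)*Sn^2 + (-2)*S2*Sn + (-2)) * Complex.I_sq + ((1)) * hcs
  · rw [hθ, div_eq_div_iff (mul_ne_zero hlam0 hD3ne) hs0, hD3, hα, hlam]
    field_simp
    linear_combination ((1)*Complex.I^2) * hS + ((1)) * hs2 + ((1)*C^2 + (2)*S2*Sn + (1)*Sn^2 + (1)*Complex.I*C*Sn + (1)*S2*Complex.I*C + (2)) * Complex.I_sq + ((-1)) * hcs
  · rw [hθ, div_eq_div_iff (mul_ne_zero hlam0 hβ0) hs0, h4, hα, hβ, hlam]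
    field_simp
    linear_combination ((2)*Complex.I^2*C + (2)*Complex.I^3*Sn + (1)*S2*Complex.I^3) * hS + ((1)*C + (1)*Complex.I*Sn) * hs2 + ((2)*S2*C*Sn + (1)*S2*Complex.I*Sn^2 + (3)*C + (3)*Complex.I*Sn + (1)*S2*Complex.I) * Complex.I_sq + ((1)*S2*Complex.I) * hcs
end
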